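/- Let p ∈ ℤ[z] be a polynomial of degree d ≥ 1 with positive leading coefficient a_d. There exist positive integers M and N (depending only on p) such that for all integers m₁, m₂ > M, all residues α₁, α₂, and every interval I ⊆ ℕ of length N, there exists z ∈ I with p(z) ≢ α₁ (mod m₁) and p(z) ≢ α₂ (mod m₂). -/

import Mathlib

open Polynomial Finset fwdDiff


lemma my_taylor_coeff_high (p : Polynomial ℤ) (h : ℤ) (k : ℕ) (hk : p.natDegree ≤ k) :
    (Polynomial.taylor h p).coeff k = p.coeff k := by
  have hdeg : (Polynomial.hasseDeriv k p).natDegree ≤ 0 :=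
    le_trans (p.natDegree_hasseDeriv_le k) (by omega)
  rw [Polynomial.taylor_coeff, Polynomial.eq_C_of_natDegree_le_zero hdeg, Polynomial.eval_C,
    Polynomial.hasseDeriv_coeff]
  simp

lemma my_taylor_sub_coeff (p : Polynomial ℤ) (h : ℤ) (n : ℕ) (hp : p.natDegree ≤ n + 1) :
    ((Polynomial.taylor h p) - p).coeff n = (n + 1 : ℤ) * p.coeff (n + 1) * h := by
  have hdeg : (Polynomial.hasseDeriv n p).natDegree < 2 := by
    have := p.natDegree_hasseDeriv_le n; omega
  rw [Polynomial.coeff_sub, Polynomial.taylor_coeff, Polynomial.eval_eq_sum_range' hdeg]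
  rw [Finset.sum_range_succ, Finset.sum_range_one]
  simp only [Polynomial.hasseDeriv_coeff, zero_add, Nat.choose_self, pow_zero, pow_one]
  have h1 : (1 + n).choose n = n + 1 := by
    rw [add_comm, Nat.choose_succ_self_right]
  rw [h1]
  push_cast
  ring

lemma my_taylor_sub_natDegree (p : Polynomial ℤ) (h : ℤ) (n : ℕ) (hp : p.natDegree ≤ n + 1) :
    ((Polynomial.taylor h p) - p).natDegree ≤ n := by
  rw [Polynomial.natDegree_le_iff_coeff_eq_zero]
  intro k hk
  rw [Polynomial.coeff_sub, my_taylor_coeff_high p h k (le_trans hp hk), sub_self]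

lemma my_fdiff_eval (h : ℤ) : ∀ (n : ℕ) (p : Polynomial ℤ), p.natDegree ≤ n →
    (fwdDiff h)^[n] (fun x => p.eval x) = fun _ => (n.factorial : ℤ) * h ^ n * p.coeff n := by
  intro n
  induction n with
  | zero =>
    intro p hp
    rw [Polynomial.eq_C_of_natDegree_le_zero hp]
    simp
  | succ n ih =>
    intro p hp
    rw [Function.iterate_succ_apply]
    have hq : fwdDiff h (fun x => p.eval x) = fun x => ((Polynomial.taylor h p) - p).eval x := by
      funext x
      simp [fwdDiff, Polynomial.taylor_eval]
    rw [hq, ih _ (my_taylor_sub_natDegree p h n hp), my_taylor_sub_coeff p h n hp]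
    funext x
    rw [Nat.factorial_succ]
    push_cast
    ring

lemma my_finVdW (d : ℕ) : ∃ N : ℕ, 0 < N ∧ ∀ (C : ℕ → Bool) (a : ℕ), ∃ b s : ℕ,
    0 < s ∧ a ≤ b ∧ b + d * s < a + N ∧ ∃ c, ∀ i : ℕ, i ≤ d → C (b + i * s) = c := by
  classical
  obtain ⟨ι, _inst, hι⟩ :=
    Combinatorics.Line.exists_mono_in_high_dimension (Fin (d + 1)) Bool
  refine ⟨d * Fintype.card ι + 1, Nat.succ_pos _, fun C a => ?_⟩
  obtain ⟨l, c, hl⟩ := hι fun v => C (a + ∑ i, (v i : ℕ))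
  set s0 : Finset ι := Finset.univ.filter (fun i => l.idxFun i = none) with hs0
  have key : ∀ x : Fin (d + 1), (∑ i, ((l x) i : ℕ)) =
      (∑ i ∈ s0ᶜ, ((l (0 : Fin (d+1))) i : ℕ)) + s0.card * (x : ℕ) := by
    intro x
    rw [← Finset.sum_add_sum_compl s0 (fun i => ((l x) i : ℕ)), add_comm]
    congr 1
    · refine Finset.sum_congr rfl (fun i hi => ?_)
      rw [Finset.mem_compl, hs0, Finset.mem_filter] at hi
      have hne : l.idxFun i ≠ none := fun h => hi ⟨Finset.mem_univ _, h⟩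
      obtain ⟨y, hy⟩ := Option.ne_none_iff_exists'.mp hne
      rw [l.apply_some hy, l.apply_some hy]
    · rw [Finset.sum_congr rfl (fun i hi => ?_), Finset.sum_const, smul_eq_mul]
      rw [hs0, Finset.mem_filter] at hi
      rw [l.apply_none x i hi.2]
  have hcard : 0 < s0.card := by
    obtain ⟨i, hi⟩ := l.proper
    exact Finset.card_pos.mpr ⟨i, by rw [hs0, Finset.mem_filter]; exact ⟨Finset.mem_univ _, hi⟩⟩
  refine ⟨a + ∑ i ∈ s0ᶜ, ((l (0 : Fin (d+1))) i : ℕ), s0.card, hcard, Nat.le_add_right _ _,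
    ?_, c, fun i hi => ?_⟩
  · have hb : (∑ i ∈ s0ᶜ, ((l (0 : Fin (d+1))) i : ℕ)) + s0.card * d ≤ d * Fintype.card ι := by
      have := key ⟨d, Nat.lt_succ_self d⟩
      rw [← this]
      calc (∑ i, ((l ⟨d, Nat.lt_succ_self d⟩) i : ℕ))
          ≤ ∑ _i : ι, d := Finset.sum_le_sum (fun i _ => Fin.is_le _)
        _ = d * Fintype.card ι := by rw [Finset.sum_const, smul_eq_mul, Finset.card_univ, mul_comm]
    rw [mul_comm (#s0) d] at hb
    omega
  · have := hl ⟨i, Nat.lt_succ_of_le hi⟩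
    simp only at this
    rw [key ⟨i, Nat.lt_succ_of_le hi⟩] at this
    rw [← this]
    congr 1
    ring


theorem interval_escape_two_moduli (p : Polynomial ℤ) (hd : 1 ≤ p.natDegree)
    (hlead : 0 < p.leadingCoeff) :
    ∃ M N : ℕ, 0 < M ∧ 0 < N ∧
      ∀ m₁ m₂ : ℕ, M < m₁ → M < m₂ → ∀ α₁ α₂ : ℤ, ∀ a : ℕ,
        ∃ z ∈ Finset.Ico a (a + N),
          ¬ (p.eval (z : ℤ) ≡ α₁ [ZMOD (m₁ : ℤ)]) ∧
          ¬ (p.eval (z : ℤ) ≡ α₂ [ZMOD (m₂ : ℤ)]) := by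
  classical
  obtain ⟨N, hN, hvdw⟩ := my_finVdW p.natDegree
  set d := p.natDegree with hdd
  set L := p.leadingCoeff with hLL
  have hL0 : 0 < L.toNat := by omega
  refine ⟨d.factorial * L.toNat * N ^ d, N,
    Nat.mul_pos (Nat.mul_pos d.factorial_pos hL0) (Nat.pow_pos (n := d) hN), hN, ?_⟩
  intro m₁ m₂ hm₁ hm₂ α₁ α₂ a
  by_contra hcon
  push_neg at hcon
  obtain ⟨b, s, hs, hab, hbd, c, hc⟩ :=
    hvdw (fun z => decide (p.eval (z : ℤ) ≡ α₁ [ZMOD (m₁ : ℤ)])) a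
  have main : ∃ (m : ℕ) (α : ℤ), (d.factorial * L.toNat * N ^ d) < m ∧
      ∀ i : ℕ, i ≤ d → p.eval ((b + i * s : ℕ) : ℤ) ≡ α [ZMOD (m : ℤ)] := by
    cases c with
    | true => exact ⟨m₁, α₁, hm₁, fun i hi => of_decide_eq_true (hc i hi)⟩
    | false =>
      refine ⟨m₂, α₂, hm₂, fun i hi => ?_⟩
      have hz : b + i * s ∈ Finset.Ico a (a + N) := by
        rw [Finset.mem_Ico]
        have : i * s ≤ d * s := Nat.mul_le_mul_right s hi
        omega
      exact hcon _ hz (of_decide_eq_false (hc i hi))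
  obtain ⟨m, α, hm, hall⟩ := main
  have hfd := my_fdiff_eval (s : ℤ) d p le_rfl
  have hsum := fwdDiff_iter_eq_sum_shift (s : ℤ) (fun x : ℤ => p.eval x) d (b : ℤ)
  rw [hfd] at hsum
  simp only [zsmul_eq_mul, nsmul_eq_mul, Int.cast_id] at hsum
  -- hsum : d! * s^d * p.coeff d = ∑ k in range (d+1), ((-1)^(d-k) * choose d k) * p.eval (b + k * s)
  have h0 : (∑ k ∈ Finset.range (d + 1), ((-1 : ℤ) ^ (d - k) * (d.choose k))) = 0 := by
    have hre := Finset.sum_range_reflect (fun k => ((-1 : ℤ) ^ (d - k) * (d.choose k))) (d + 1)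
    rw [← hre]
    have hterm : ∀ j ∈ Finset.range (d + 1),
        ((-1 : ℤ) ^ (d - (d + 1 - 1 - j)) * (d.choose (d + 1 - 1 - j)))
          = (-1 : ℤ) ^ j * (d.choose j) := by
      intro j hj
      rw [Finset.mem_range] at hj
      have h1 : d + 1 - 1 - j = d - j := by omega
      have h2 : d - (d - j) = j := by omega
      rw [h1, h2, Nat.choose_symm (by omega)]
    rw [Finset.sum_congr rfl hterm, Int.alternating_sum_range_choose_of_ne (by omega)]
  have hdvd : (m : ℤ) ∣ (d.factorial : ℤ) * (s : ℤ) ^ d * L := by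
    have heq : (d.factorial : ℤ) * (s : ℤ) ^ d * L =
        ∑ k ∈ Finset.range (d + 1),
          ((-1 : ℤ) ^ (d - k) * (d.choose k)) * (p.eval ((b : ℤ) + (k : ℤ) * (s : ℤ)) - α) := by
      simp only [mul_sub]
      rw [Finset.sum_sub_distrib, ← Finset.sum_mul, h0, zero_mul, sub_zero, ← hsum]
      rw [hLL, Polynomial.leadingCoeff, ← hdd]
    rw [heq]
    refine Finset.dvd_sum fun k hk => Dvd.dvd.mul_left ?_ _
    have hcast : ((b + k * s : ℕ) : ℤ) = (b : ℤ) + (k : ℤ) * (s : ℤ) := by push_cast; ring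
    rw [Finset.mem_range] at hk
    have := (hall k (by omega)).symm.dvd
    rwa [hcast] at this
  have hTpos : 0 < (d.factorial : ℤ) * (s : ℤ) ^ d * L :=
    mul_pos (mul_pos (by exact_mod_cast d.factorial_pos)
      (pow_pos (by exact_mod_cast hs) d)) hlead
  have hmle := Int.le_of_dvd hTpos hdvd
  have hsN : s ≤ N := by
    have h1 : d * s < N := by omega
    have h2 : 1 * s ≤ d * s := Nat.mul_le_mul_right s hd
    omega
  have hpow : (s : ℤ) ^ d ≤ (N : ℤ) ^ d :=
    pow_le_pow_left₀ (by positivity) (by exact_mod_cast hsN) d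
  have hle : (d.factorial : ℤ) * (s : ℤ) ^ d * L ≤ ((d.factorial * L.toNat * N ^ d : ℕ) : ℤ) := by
    push_cast [Int.toNat_of_nonneg hlead.le]
    nlinarith [d.factorial_pos, hlead, hpow, pow_pos (show (0:ℤ) < (s:ℤ) by exact_mod_cast hs) d]
  have hmM : ((d.factorial * L.toNat * N ^ d : ℕ) : ℤ) < (m : ℤ) := by exact_mod_cast hm
  omega
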